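/- Let n ≥ 2, and let {φ_0, …, φ_{n−1}} and {ψ_0, …, ψ_{n−1}} be two orthonormal bases of ℂⁿ. Let M be an n×n Hermitian matrix lying in the real span of the set {|φ_i⟩⟨φ_i| − I/n : 0 ≤ i ≤ n−1} ∪ {|ψ_j⟩⟨ψ_j| − I/n : 0 ≤ j ≤ n−1}, where I is the n×n identity matrix. Then for all i, j with ⟨ψ_j, φ_i⟩ ≠ 0, the weak value W_{φ_i,ψ_j}(M) = ⟨ψ_j, M φ_i⟩ / ⟨ψ_j, φ_i⟩ is a real number. -/

import Mathlib

noncomputable section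

/-- The rank-one projector `|v⟩⟨v|` with entries `v i * conj (v j)`. -/
def projN (n : ℕ) (v : EuclideanSpace ℂ (Fin n)) : Matrix (Fin n) (Fin n) ℂ :=
  Matrix.of fun i j => v i * star (v j)

/-- Matrix-vector multiplication, valued in `EuclideanSpace ℂ (Fin n)`. -/
def mulVecEN (n : ℕ) (M : Matrix (Fin n) (Fin n) ℂ) (v : EuclideanSpace ℂ (Fin n)) :
    EuclideanSpace ℂ (Fin n) :=
  (WithLp.equiv 2 (Fin n → ℂ)).symm (M.mulVec ((WithLp.equiv 2 (Fin n → ℂ)) v))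

/-- The weak value `W_{φ,ψ}(M) = ⟨ψ, Mφ⟩ / ⟨ψ, φ⟩`. -/
def weakN (n : ℕ) (φ ψ : EuclideanSpace ℂ (Fin n)) (M : Matrix (Fin n) (Fin n) ℂ) : ℂ :=
  (inner ℂ ψ (mulVecEN n M φ) : ℂ) / (inner ℂ ψ φ : ℂ)

lemma f_eq (n : ℕ) (ψ φ : EuclideanSpace ℂ (Fin n)) (A : Matrix (Fin n) (Fin n) ℂ) :
    (inner ℂ ψ (mulVecEN n A φ) : ℂ) = ∑ a, ∑ b, (starRingEnd ℂ) (ψ a) * (A a b * φ b) := by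
  simp [mulVecEN, PiLp.inner_apply, Matrix.mulVec, dotProduct, Finset.mul_sum,
    RCLike.inner_apply]
  simp only [Finset.sum_mul]
  exact Finset.sum_congr rfl fun a _ => Finset.sum_congr rfl fun b _ => by ring

lemma ip_eq (n : ℕ) (x y : EuclideanSpace ℂ (Fin n)) :
    (inner ℂ x y : ℂ) = ∑ a, (starRingEnd ℂ) (x a) * y a := by
  simp [PiLp.inner_apply, RCLike.inner_apply]
  exact Finset.sum_congr rfl fun a _ => by ring

lemma f_add (n : ℕ) (ψ φ : EuclideanSpace ℂ (Fin n)) (A B : Matrix (Fin n) (Fin n) ℂ) :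
    (inner ℂ ψ (mulVecEN n (A + B) φ) : ℂ)
      = (inner ℂ ψ (mulVecEN n A φ) : ℂ) + (inner ℂ ψ (mulVecEN n B φ) : ℂ) := by
  simp only [f_eq, Matrix.add_apply, ← Finset.sum_add_distrib]
  exact Finset.sum_congr rfl fun a _ => Finset.sum_congr rfl fun b _ => by ring

lemma f_smul (n : ℕ) (ψ φ : EuclideanSpace ℂ (Fin n)) (A : Matrix (Fin n) (Fin n) ℂ) (r : ℝ) :
    (inner ℂ ψ (mulVecEN n (r • A) φ) : ℂ) = (r : ℂ) * (inner ℂ ψ (mulVecEN n A φ) : ℂ) := by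
  simp only [f_eq, Matrix.smul_apply, Finset.mul_sum]
  exact Finset.sum_congr rfl fun a _ => Finset.sum_congr rfl fun b _ => by
    rw [Complex.real_smul]; ring

lemma f_gen (n : ℕ) (ψ φ v : EuclideanSpace ℂ (Fin n)) :
    (inner ℂ ψ (mulVecEN n (projN n v - ((n : ℂ))⁻¹ • 1) φ) : ℂ)
      = (inner ℂ ψ v : ℂ) * (inner ℂ v φ : ℂ) - (n : ℂ)⁻¹ * (inner ℂ ψ φ : ℂ) := by
  rw [f_eq, ip_eq, ip_eq, ip_eq, Finset.sum_mul_sum]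
  simp only [Matrix.sub_apply, Matrix.smul_apply, Matrix.one_apply, projN,
    Matrix.of_apply, smul_eq_mul, mul_ite, mul_one, mul_zero, ite_mul, zero_mul,
    mul_sub, sub_mul, Finset.sum_sub_distrib, Finset.sum_ite_eq, Finset.mem_univ, if_true,
    Finset.mul_sum]
  congr 1
  · exact Finset.sum_congr rfl fun a _ => Finset.sum_congr rfl fun b _ => by
      simp only [Complex.star_def]; ring
  · exact Finset.sum_congr rfl fun a _ => by ring

/-- if `M` is Hermitian and lies in the real span of the shifted projectors
`|φ_i⟩⟨φ_i| - I/n` and `|ψ_j⟩⟨ψ_j| - I/n` of two orthonormal bases, then every weak value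
`W_{φ_i,ψ_j}(M)` (whenever `⟨ψ_j, φ_i⟩ ≠ 0`) is real. -/
theorem stmt17 (n : ℕ) (hn : 2 ≤ n)
    (φv ψv : Fin n → EuclideanSpace ℂ (Fin n))
    (hφ : Orthonormal ℂ φv) (hψ : Orthonormal ℂ ψv)
    (M : Matrix (Fin n) (Fin n) ℂ) (hM : M.IsHermitian)
    (hspan : M ∈ Submodule.span ℝ
      ((Set.range fun i : Fin n =>
          projN n (φv i) - ((n : ℂ))⁻¹ • (1 : Matrix (Fin n) (Fin n) ℂ)) ∪
        (Set.range fun j : Fin n =>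
          projN n (ψv j) - ((n : ℂ))⁻¹ • (1 : Matrix (Fin n) (Fin n) ℂ)))) :
    ∀ i j : Fin n, (inner ℂ (ψv j) (φv i) : ℂ) ≠ 0 →
      (weakN n (φv i) (ψv j) M).im = 0 := by
  intro i j hne
  have key : ∃ r : ℝ, (inner ℂ (ψv j) (mulVecEN n M (φv i)) : ℂ)
      = (r : ℂ) * (inner ℂ (ψv j) (φv i) : ℂ) := by
    refine Submodule.span_induction ?_ ?_ ?_ ?_ hspan
    · rintro s (⟨k, rfl⟩ | ⟨k, rfl⟩)
      · rw [f_gen]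
        have h1 : (inner ℂ (φv k) (φv i) : ℂ) = if k = i then 1 else 0 :=
          orthonormal_iff_ite.mp hφ k i
        by_cases hk : k = i
        · refine ⟨1 - (n : ℝ)⁻¹, ?_⟩
          subst hk
          rw [h1, if_pos rfl]
          push_cast
          ring
        · refine ⟨-(n : ℝ)⁻¹, ?_⟩
          rw [h1, if_neg hk]
          push_cast
          ring
      · rw [f_gen]
        have h1 : (inner ℂ (ψv j) (ψv k) : ℂ) = if j = k then 1 else 0 :=
          orthonormal_iff_ite.mp hψ j k
        by_cases hk : j = k
        · refine ⟨1 - (n : ℝ)⁻¹, ?_⟩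
          subst hk
          rw [h1, if_pos rfl]
          push_cast
          ring
        · refine ⟨-(n : ℝ)⁻¹, ?_⟩
          rw [h1, if_neg hk]
          push_cast
          ring
    · exact ⟨0, by rw [f_eq]; simp⟩
    · rintro A B _ _ ⟨r1, h1⟩ ⟨r2, h2⟩
      exact ⟨r1 + r2, by rw [f_add, h1, h2]; push_cast; ring⟩
    · rintro r A _ ⟨r1, h1⟩
      exact ⟨r * r1, by rw [f_smul, h1]; push_cast; ring⟩
  obtain ⟨r, hr⟩ := key
  unfold weakN
  rw [hr, mul_div_assoc, div_self hne, mul_one, Complex.ofReal_im]
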